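/- For every 2×2 complex Hermitian matrix ρ with Tr(ρ) = 1, the purity satisfies Tr(ρ²) = 6π · ∫₀^{2π}∫₀^π Q_ρ(θ,φ)² sinθ dθ dφ − 1. -/

import Mathlib

open Matrix Complex Real MeasureTheory

noncomputable section

/-- The spin coherent state |θ,φ⟩ = cos(θ/2)|0⟩ + e^{iφ} sin(θ/2)|1⟩. -/
def cohVec (θ φ : ℝ) : Fin 2 → ℂ :=
  ![((Real.cos (θ / 2) : ℝ) : ℂ),
    Complex.exp (Complex.I * (φ : ℂ)) * ((Real.sin (θ / 2) : ℝ) : ℂ)]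

/-- The Husimi Q function of a 2×2 complex matrix. -/
def Qfun (A : Matrix (Fin 2) (Fin 2) ℂ) (θ φ : ℝ) : ℂ :=
  (1 / (2 * Real.pi) : ℂ) *
    ∑ k, ∑ l, (starRingEnd ℂ) (cohVec θ φ k) * A k l * cohVec θ φ l

lemma inner_int (a d β : ℂ) :
    (∫ θ in (0:ℝ)..Real.pi,
      ((a * ((Real.cos (θ/2) : ℝ) : ℂ)^2 + d * ((Real.sin (θ/2) : ℝ) : ℂ)^2 +
        β * ((Real.cos (θ/2) : ℝ) : ℂ) * ((Real.sin (θ/2) : ℝ) : ℂ))^2 *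
        ((Real.sin θ : ℝ) : ℂ)))
      = (a+d)^2/2 + (a-d)^2/6 + β^2/3 + (a+d)*β*(Real.pi:ℂ)/4 := by
  set T := a + d with hT
  set D := a - d with hD
  set F : ℝ → ℂ := fun θ =>
    ((-T^2 - β^2)/4) * ((Real.cos θ : ℝ) : ℂ)
    + ((β^2 - D^2)/12) * ((Real.cos θ ^ 3 : ℝ) : ℂ)
    + (T*D/4) * ((Real.sin θ ^ 2 : ℝ) : ℂ)
    + (D*β/6) * ((Real.sin θ ^ 3 : ℝ) : ℂ)
    + (T*β/4) * ((θ : ℝ) : ℂ)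
    - (T*β/8) * ((Real.sin (2*θ) : ℝ) : ℂ) with hFdef
  have hderiv : ∀ x ∈ Set.uIcc (0:ℝ) Real.pi, HasDerivAt F
      ((a * ((Real.cos (x/2) : ℝ) : ℂ)^2 + d * ((Real.sin (x/2) : ℝ) : ℂ)^2 +
        β * ((Real.cos (x/2) : ℝ) : ℂ) * ((Real.sin (x/2) : ℝ) : ℂ))^2 *
        ((Real.sin x : ℝ) : ℂ)) x := by
    intro x _
    have h1 : HasDerivAt (fun t : ℝ => ((Real.cos t : ℝ) : ℂ)) (↑(-Real.sin x)) x :=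
      (Real.hasDerivAt_cos x).ofReal_comp
    have h2 := ((Real.hasDerivAt_cos x).pow 3).ofReal_comp
    have h3 := ((Real.hasDerivAt_sin x).pow 2).ofReal_comp
    have h4 := ((Real.hasDerivAt_sin x).pow 3).ofReal_comp
    have h5 : HasDerivAt (fun t : ℝ => ((t : ℝ) : ℂ)) 1 x := by
      simpa using (hasDerivAt_id x).ofReal_comp
    have h6r : HasDerivAt (fun t : ℝ => Real.sin (2*t)) (Real.cos (2*x) * 2) x := by
      have := (Real.hasDerivAt_sin (2*x)).comp x ((hasDerivAt_id x).const_mul 2)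
      simpa [Function.comp_def] using this
    have h6 := h6r.ofReal_comp
    have h := (((((h1.const_mul ((-T^2 - β^2)/4)).add
        (h2.const_mul ((β^2 - D^2)/12))).add
        (h3.const_mul (T*D/4))).add
        (h4.const_mul (D*β/6))).add
        (h5.const_mul (T*β/4))).sub
        (h6.const_mul (T*β/8))
    refine h.congr_deriv ?_
    symm
    have hs : ((Real.sin x : ℝ) : ℂ) = 2 * ((Real.cos (x/2) : ℝ) : ℂ) * ((Real.sin (x/2) : ℝ) : ℂ) := by
      rw [show x = 2*(x/2) by ring, Real.sin_two_mul]
      push_cast [-Complex.ofReal_cos, -Complex.ofReal_sin]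
      ring_nf
    have hu : ((Real.cos x : ℝ) : ℂ) = 2 * ((Real.cos (x/2) : ℝ) : ℂ)^2 - 1 := by
      rw [show x = 2*(x/2) by ring, Real.cos_two_mul]
      push_cast [-Complex.ofReal_cos, -Complex.ofReal_sin]
      ring_nf
    have hw : ((Real.cos (2*x) : ℝ) : ℂ) = 2 * ((Real.cos x : ℝ) : ℂ)^2 - 1 := by
      rw [Real.cos_two_mul]
      push_cast [-Complex.ofReal_cos, -Complex.ofReal_sin]
      ring
    have hp : ((Real.sin (x/2) : ℝ) : ℂ)^2 + ((Real.cos (x/2) : ℝ) : ℂ)^2 = 1 := by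
      exact_mod_cast congrArg (Complex.ofReal) (Real.sin_sq_add_cos_sq (x/2))
    push_cast [-Complex.ofReal_cos, -Complex.ofReal_sin]
    rw [hw, hu, hs]
    set C := ((Real.cos (x/2) : ℝ) : ℂ)
    set S := ((Real.sin (x/2) : ℝ) : ℂ)
    linear_combination (2*d^2*C*S^3 + 4*β*d*C^2*S^2 + 4*a*d*C^3*S + 2*β^2*C^3*S
      - 2*d^2*C^3*S + 2*d^2*C*S + 2*a*β*C^2 + 2*β*d*C^2) * hp
  have hint : IntervalIntegrable (fun θ : ℝ =>
      ((a * ((Real.cos (θ/2) : ℝ) : ℂ)^2 + d * ((Real.sin (θ/2) : ℝ) : ℂ)^2 +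
        β * ((Real.cos (θ/2) : ℝ) : ℂ) * ((Real.sin (θ/2) : ℝ) : ℂ))^2 *
        ((Real.sin θ : ℝ) : ℂ))) MeasureTheory.volume 0 Real.pi := by
    apply Continuous.intervalIntegrable
    fun_prop
  rw [intervalIntegral.integral_eq_sub_of_hasDerivAt hderiv hint]
  simp only [hFdef, Real.cos_pi, Real.sin_pi, Real.cos_zero, Real.sin_zero,
    mul_zero, Real.sin_two_pi]
  norm_num
  ring

lemma outer_int (c0 c1 c2 c3 c4 : ℂ) :
    (∫ φ in (0:ℝ)..(2*Real.pi),
      (c0 + c1 * Complex.exp (Complex.I*(φ:ℂ)) + c2 * Complex.exp (-(Complex.I*(φ:ℂ)))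
        + c3 * Complex.exp (Complex.I*(φ:ℂ))^2 + c4 * Complex.exp (-(Complex.I*(φ:ℂ)))^2))
      = c0 * (2*Real.pi) := by
  set F : ℝ → ℂ := fun φ =>
    c0 * (φ:ℂ) + (c1/Complex.I) * Complex.exp (Complex.I*(φ:ℂ))
      - (c2/Complex.I) * Complex.exp (-(Complex.I*(φ:ℂ)))
      + (c3/(2*Complex.I)) * (Complex.exp (Complex.I*(φ:ℂ)) * Complex.exp (Complex.I*(φ:ℂ)))
      - (c4/(2*Complex.I)) * (Complex.exp (-(Complex.I*(φ:ℂ))) * Complex.exp (-(Complex.I*(φ:ℂ)))) with hFdef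
  have hderiv : ∀ x ∈ Set.uIcc (0:ℝ) (2*Real.pi), HasDerivAt F
      (c0 + c1 * Complex.exp (Complex.I*(x:ℂ)) + c2 * Complex.exp (-(Complex.I*(x:ℂ)))
        + c3 * Complex.exp (Complex.I*(x:ℂ))^2 + c4 * Complex.exp (-(Complex.I*(x:ℂ)))^2) x := by
    intro x _
    have hid : HasDerivAt (fun t : ℝ => ((t:ℝ):ℂ)) 1 x := by
      simpa using (hasDerivAt_id x).ofReal_comp
    have hE : HasDerivAt (fun t : ℝ => Complex.exp (Complex.I*(t:ℂ)))
        (Complex.exp (Complex.I*(x:ℂ)) * Complex.I) x := by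
      simpa using (hid.const_mul Complex.I).cexp
    have hE' : HasDerivAt (fun t : ℝ => Complex.exp (-(Complex.I*(t:ℂ))))
        (Complex.exp (-(Complex.I*(x:ℂ))) * (-Complex.I)) x := by
      simpa using ((hid.const_mul Complex.I).neg).cexp
    have hE2 := hE.mul hE
    have hE'2 := hE'.mul hE'
    have h := (((((hid.const_mul c0).add (hE.const_mul (c1/Complex.I))).sub
        (hE'.const_mul (c2/Complex.I))).add
        (hE2.const_mul (c3/(2*Complex.I)))).sub
        (hE'2.const_mul (c4/(2*Complex.I))))
    refine h.congr_deriv ?_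
    symm
    have hI : Complex.I ≠ 0 := Complex.I_ne_zero
    field_simp
    ring
  have hint : IntervalIntegrable (fun φ : ℝ =>
      (c0 + c1 * Complex.exp (Complex.I*(φ:ℂ)) + c2 * Complex.exp (-(Complex.I*(φ:ℂ)))
        + c3 * Complex.exp (Complex.I*(φ:ℂ))^2 + c4 * Complex.exp (-(Complex.I*(φ:ℂ)))^2))
      MeasureTheory.volume 0 (2*Real.pi) := by
    apply Continuous.intervalIntegrable
    fun_prop
  rw [intervalIntegral.integral_eq_sub_of_hasDerivAt hderiv hint]
  have h2π : Complex.I * ((2*Real.pi : ℝ) : ℂ) = 2*(Real.pi:ℂ)*Complex.I := by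
    push_cast; ring
  have hneg : Complex.exp (-(2*(Real.pi:ℂ)*Complex.I)) = 1 := by
    rw [Complex.exp_neg, Complex.exp_two_pi_mul_I]; norm_num
  simp only [hFdef, h2π, hneg, Complex.exp_two_pi_mul_I]
  norm_num

lemma Qfun_eq (ρ : Matrix (Fin 2) (Fin 2) ℂ) (θ φ : ℝ) :
    Qfun ρ θ φ = (1 / (2 * Real.pi) : ℂ) *
      (ρ 0 0 * ((Real.cos (θ/2) : ℝ) : ℂ)^2 + ρ 1 1 * ((Real.sin (θ/2) : ℝ) : ℂ)^2 +
        (ρ 0 1 * Complex.exp (Complex.I*(φ:ℂ)) + ρ 1 0 * Complex.exp (-(Complex.I*(φ:ℂ))))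
          * ((Real.cos (θ/2) : ℝ) : ℂ) * ((Real.sin (θ/2) : ℝ) : ℂ)) := by
  have hconj : (starRingEnd ℂ) (Complex.exp (Complex.I*(φ:ℂ))) =
      Complex.exp (-(Complex.I*(φ:ℂ))) := by
    rw [← Complex.exp_conj]
    congr 1
    simp [Complex.conj_I]
  simp only [Qfun, cohVec, Fin.sum_univ_two, Matrix.cons_val_zero, Matrix.cons_val_one,
    Matrix.head_cons, _root_.map_mul, Complex.conj_ofReal, hconj]
  have hEE : Complex.exp (Complex.I*(φ:ℂ)) * Complex.exp (-(Complex.I*(φ:ℂ))) = 1 := by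
    rw [← Complex.exp_add]; simp
  linear_combination (((Real.pi:ℝ):ℂ))⁻¹ * ((Real.sin (θ/2):ℝ):ℂ)^2 * ρ 1 1 * (1/2) * hEE


/-- purity in phase-space,
Tr(ρ²) = 6π ∫ Q_ρ(θ,φ)² sinθ dθ dφ − 1. -/
theorem purity_in_phase_space (ρ : Matrix (Fin 2) (Fin 2) ℂ)
    (hherm : ρ.IsHermitian) (htr : ρ.trace = 1) :
    Matrix.trace (ρ * ρ) =
      (6 * Real.pi : ℂ) *
        (∫ φ in (0:ℝ)..(2 * Real.pi), ∫ θ in (0:ℝ)..Real.pi,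
          (Qfun ρ θ φ) ^ 2 * ((Real.sin θ : ℝ) : ℂ)) - 1 := by
  set K : ℂ := (1 / (2 * Real.pi) : ℂ) with hK
  set a : ℂ := ρ 0 0 with ha
  set d : ℂ := ρ 1 1 with hd
  set b : ℂ := ρ 0 1 with hb
  set c : ℂ := ρ 1 0 with hc
  set c0 : ℂ := K^2*((a+d)^2/2+(a-d)^2/6+2*b*c/3) with hc0
  have hinner : ∀ φ : ℝ,
      (∫ θ in (0:ℝ)..Real.pi, (Qfun ρ θ φ)^2 * ((Real.sin θ : ℝ) : ℂ)) =
      K^2 * ((a+d)^2/2 + (a-d)^2/6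
        + (b * Complex.exp (Complex.I*(φ:ℂ)) + c * Complex.exp (-(Complex.I*(φ:ℂ))))^2/3
        + (a+d)*(b * Complex.exp (Complex.I*(φ:ℂ)) + c * Complex.exp (-(Complex.I*(φ:ℂ))))*(Real.pi:ℂ)/4) := by
    intro φ
    have h1 : ∀ θ : ℝ, (Qfun ρ θ φ)^2 * ((Real.sin θ : ℝ) : ℂ) =
        K^2 * ((a * ((Real.cos (θ/2) : ℝ) : ℂ)^2 + d * ((Real.sin (θ/2) : ℝ) : ℂ)^2 +
          (b * Complex.exp (Complex.I*(φ:ℂ)) + c * Complex.exp (-(Complex.I*(φ:ℂ)))) *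
            ((Real.cos (θ/2) : ℝ) : ℂ) * ((Real.sin (θ/2) : ℝ) : ℂ))^2 *
          ((Real.sin θ : ℝ) : ℂ)) := by
      intro θ
      rw [Qfun_eq]
      ring
    simp_rw [h1, intervalIntegral.integral_const_mul,
      inner_int a d (b * Complex.exp (Complex.I*(φ:ℂ)) + c * Complex.exp (-(Complex.I*(φ:ℂ))))]
  have h3 : ∀ φ : ℝ,
      K^2 * ((a+d)^2/2 + (a-d)^2/6
        + (b * Complex.exp (Complex.I*(φ:ℂ)) + c * Complex.exp (-(Complex.I*(φ:ℂ))))^2/3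
        + (a+d)*(b * Complex.exp (Complex.I*(φ:ℂ)) + c * Complex.exp (-(Complex.I*(φ:ℂ))))*(Real.pi:ℂ)/4)
      = c0 + (K^2*(a+d)*b*(Real.pi:ℂ)/4) * Complex.exp (Complex.I*(φ:ℂ))
          + (K^2*(a+d)*c*(Real.pi:ℂ)/4) * Complex.exp (-(Complex.I*(φ:ℂ)))
          + (K^2*b^2/3) * Complex.exp (Complex.I*(φ:ℂ))^2
          + (K^2*c^2/3) * Complex.exp (-(Complex.I*(φ:ℂ)))^2 := by
    intro φ
    have hEE : Complex.exp (Complex.I*(φ:ℂ)) * Complex.exp (-(Complex.I*(φ:ℂ))) = 1 := by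
      rw [← Complex.exp_add]; simp
    linear_combination (2*b*c*K^2/3) * hEE
  have houter : (∫ φ in (0:ℝ)..(2 * Real.pi), ∫ θ in (0:ℝ)..Real.pi,
      (Qfun ρ θ φ) ^ 2 * ((Real.sin θ : ℝ) : ℂ)) = c0 * (2*Real.pi) := by
    simp_rw [hinner, h3]
    exact outer_int c0 (K^2*(a+d)*b*(Real.pi:ℂ)/4) (K^2*(a+d)*c*(Real.pi:ℂ)/4)
      (K^2*b^2/3) (K^2*c^2/3)
  rw [houter]
  have htrace : Matrix.trace (ρ * ρ) = a*a + b*c + c*b + d*d := by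
    simp [Matrix.trace, Matrix.mul_apply, Fin.sum_univ_two, Matrix.diag, ha, hb, hc, hd]
    ring
  have had : a + d = 1 := by
    simpa [Matrix.trace, Fin.sum_univ_two, Matrix.diag, ha, hd] using htr
  rw [htrace, hc0, hK]
  have hπ : ((Real.pi : ℝ) : ℂ) ≠ 0 := by
    exact_mod_cast Real.pi_ne_zero
  field_simp
  linear_combination (-12*(a+d+1)) * had
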